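/- Practical stability of single loop self-triggered MPC (Theorem 2): in the self-triggered value-function setting, let x : ℕ → ℝⁿ and i : ℕ → I⁰ be such that for every n, i(n) attains the minimum defining V(x(n)) and x(n+1) = M^{(i(n))} x(n). Then for every n, α/γ ≤ V(x(n)), and limsup_{n→∞} V(x(n)) ≤ (α/ε)·( 1/p* − (1−ε)/γ ). -/

import Mathlib

open Matrix Finset Filter

/-- Theorem 2: practical stability of the single loop
self-triggered MPC. Along closed-loop trajectories the value function
V(x) = min_{i ∈ I⁰} (α/i + xᵀ P⁽ⁱ⁾ x) is bounded below by α/γ and its limit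
superior is bounded above by (α/ε)(1/p* - (1-ε)/γ). -/
theorem self_triggered_practical_stability {n : ℕ}
    (I0 : Finset ℕ) (hne : I0.Nonempty) (hpos : ∀ i ∈ I0, 0 < i)
    (γ : ℕ) (hγ : γ = I0.max' hne)
    (pstar : ℕ) (hpstar : pstar ∈ I0)
    (α : ℝ) (hα : 0 < α)
    (P : ℕ → Matrix (Fin n) (Fin n) ℝ) (hP : ∀ i ∈ I0, (P i).PosSemidef)
    (M : ℕ → Matrix (Fin n) (Fin n) ℝ)
    (ε : ℝ) (hε0 : 0 < ε) (hε1 : ε ≤ 1)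
    (hcontr : ∀ i ∈ I0, ((1 - ε) • P i - (M i)ᵀ * P pstar * M i).PosSemidef)
    (V : (Fin n → ℝ) → ℝ)
    (hV : ∀ x : Fin n → ℝ, V x = I0.inf' hne (fun i => α / (i : ℝ) + x ⬝ᵥ (P i *ᵥ x)))
    (x : ℕ → Fin n → ℝ) (idx : ℕ → ℕ)
    (hidx : ∀ k, idx k ∈ I0)
    (hattain : ∀ k, α / (idx k : ℝ) + x k ⬝ᵥ (P (idx k) *ᵥ x k) = V (x k))
    (hdyn : ∀ k, x (k + 1) = M (idx k) *ᵥ x k) :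
    (∀ k, α / (γ : ℝ) ≤ V (x k)) ∧
    Filter.limsup (fun k => V (x k)) Filter.atTop ≤
      (α / ε) * (1 / (pstar : ℝ) - (1 - ε) / (γ : ℝ)) := by
 -- proof
  -- quadratic forms are nonneg
  have hquad : ∀ i ∈ I0, ∀ v : Fin n → ℝ, 0 ≤ v ⬝ᵥ (P i *ᵥ v) := by
    intro i hi v
    simpa using (hP i hi).dotProduct_mulVec_nonneg v
  have hγmem : γ ∈ I0 := hγ ▸ I0.max'_mem hne
  have hγpos : (0:ℝ) < γ := by exact_mod_cast hpos γ hγmem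
  have hpspos : (0:ℝ) < pstar := by exact_mod_cast hpos pstar hpstar
  have hαγ : ∀ i ∈ I0, α / (γ:ℝ) ≤ α / (i:ℝ) := by
    intro i hi
    have hiγ : (i:ℝ) ≤ γ := by exact_mod_cast hγ ▸ I0.le_max' i hi
    have hipos : (0:ℝ) < i := by exact_mod_cast hpos i hi
    gcongr
  have hlow : ∀ k, α / (γ:ℝ) ≤ V (x k) := by
    intro k
    rw [hV]
    apply Finset.le_inf'
    intro i hi
    have := hquad i hi (x k)
    have := hαγ i hi
    linarith
  refine ⟨hlow, ?_⟩
  set L : ℝ := (α / ε) * (1 / (pstar : ℝ) - (1 - ε) / (γ : ℝ)) with hLdef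
  have hεne : ε ≠ 0 := hε0.ne'
  have hL : ε * L = α / (pstar:ℝ) - (1 - ε) * (α / (γ:ℝ)) := by
    rw [hLdef]
    field_simp
  clear_value L
  -- key recurrence
  have hrec : ∀ k, V (x (k+1)) - L ≤ (1 - ε) * (V (x k) - L) := by
    intro k
    have hub : V (x (k+1)) ≤ α / (pstar:ℝ) + x (k+1) ⬝ᵥ (P pstar *ᵥ x (k+1)) := by
      rw [hV]
      exact Finset.inf'_le _ hpstar
    have hquadid : x k ⬝ᵥ (((M (idx k))ᵀ * P pstar * M (idx k)) *ᵥ x k)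
        = x (k+1) ⬝ᵥ (P pstar *ᵥ x (k+1)) := by
      rw [hdyn k, ← Matrix.mulVec_mulVec, ← Matrix.mulVec_mulVec,
        Matrix.dotProduct_mulVec, Matrix.vecMul_transpose]
    have hcon : x k ⬝ᵥ (((M (idx k))ᵀ * P pstar * M (idx k)) *ᵥ x k)
        ≤ (1 - ε) * (x k ⬝ᵥ (P (idx k) *ᵥ x k)) := by
      have h0 := (hcontr (idx k) (hidx k)).dotProduct_mulVec_nonneg (x k)
      simp only [star_trivial, Matrix.sub_mulVec, Matrix.smul_mulVec,
        dotProduct_sub, dotProduct_smul, smul_eq_mul] at h0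
      linarith
    have hqv : x k ⬝ᵥ (P (idx k) *ᵥ x k) = V (x k) - α / (idx k : ℝ) := by
      have := hattain k; linarith
    have hai := hαγ (idx k) (hidx k)
    have hstep : V (x (k+1)) ≤ α / (pstar:ℝ) + (1 - ε) * (V (x k) - α / (γ:ℝ)) := by
      have h1 : (1 - ε) * (V (x k) - α / (idx k : ℝ))
          ≤ (1 - ε) * (V (x k) - α / (γ:ℝ)) := by
        have : (0:ℝ) ≤ 1 - ε := by linarith
        nlinarith
      rw [← hquadid] at hub
      rw [hqv] at hcon
      linarith
    have hkey : (1 - ε) * (V (x k) - L)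
        = α / (pstar:ℝ) + (1 - ε) * (V (x k) - α / (γ:ℝ)) - L := by
      linear_combination hL
    linarith
  -- geometric decay
  set C : ℝ := max (V (x 0) - L) 0 with hCdef
  have hC0 : 0 ≤ C := le_max_right _ _
  have h1ε : (0:ℝ) ≤ 1 - ε := by linarith
  have hgeo : ∀ k, V (x k) - L ≤ (1 - ε) ^ k * C := by
    intro k
    induction k with
    | zero =>
        have h := le_max_left (V (x 0) - L) 0
        rw [pow_zero, one_mul]
        exact h
    | succ k ih =>
      calc V (x (k+1)) - L ≤ (1 - ε) * (V (x k) - L) := hrec k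
        _ ≤ (1 - ε) * ((1 - ε) ^ k * C) := by
            exact mul_le_mul_of_nonneg_left ih h1ε
        _ = (1 - ε) ^ (k+1) * C := by ring
  have htend : Tendsto (fun k => L + (1 - ε) ^ k * C) atTop (nhds L) := by
    have h0 : Tendsto (fun k : ℕ => (1 - ε) ^ k) atTop (nhds 0) := by
      apply tendsto_pow_atTop_nhds_zero_of_lt_one <;> linarith
    have := (h0.mul_const C).const_add L
    simpa using this
  have hle : ∀ k, V (x k) ≤ L + (1 - ε) ^ k * C := fun k => by linarith [hgeo k]
  have hbdd : IsBoundedUnder (· ≤ ·) atTop (fun k => L + (1 - ε) ^ k * C) :=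
    htend.isBoundedUnder_le
  have hcob : IsCoboundedUnder (· ≤ ·) atTop (fun k => V (x k)) := by
    apply IsBoundedUnder.isCoboundedUnder_le
    exact isBoundedUnder_of ⟨α / (γ:ℝ), fun k => hlow k⟩
  calc Filter.limsup (fun k => V (x k)) Filter.atTop
      ≤ Filter.limsup (fun k => L + (1 - ε) ^ k * C) atTop :=
        Filter.limsup_le_limsup (Filter.Eventually.of_forall hle) hcob hbdd
    _ = L := htend.limsup_eq
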